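/- arXiv:1811.00620 — 4 statements merged into one kernel-verified Lean document; each statement's English description precedes it below -/
import Mathlib

section
/- Let C be a nonempty closed convex subset of ℝ^n with Π_C its orthogonal projection, and define P(z, g, η) := (1/η)(z − Π_C(z − η g)) for η > 0. Let F : ℝ^n → ℝ be differentiable with Q-Lipschitz gradient (Q > 0). For any z ∈ C and η > 0, let z⁺ := Π_C(z − η ∇F(z)). Then F(z⁺) ≤ F(z) − η⟨∇F(z), P(z, ∇F(z), η)⟩ + (Qη²/2)·‖P(z, ∇F(z), η)‖², and consequently F(z⁺) ≤ F(z) − (η − Qη²/2)·‖P(z, ∇F(z), η)‖². -/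
set_option maxHeartbeats 1000000


open scoped InnerProductSpace

lemma quad_upper_bound {n : ℕ} (F : EuclideanSpace ℝ (Fin n) → ℝ) (hF : Differentiable ℝ F)
    (Q : ℝ) (hQ : 0 ≤ Q)
    (hlip : ∀ x y, ‖gradient F x - gradient F y‖ ≤ Q * ‖x - y‖)
    (x y : EuclideanSpace ℝ (Fin n)) :
    F y ≤ F x + ⟪gradient F x, y - x⟫_ℝ + Q / 2 * ‖y - x‖ ^ 2 := by
  set v := y - x with hv
  have hgl : LipschitzWith Q.toNNReal (gradient F) :=
    LipschitzWith.of_dist_le_mul fun a b => by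
      rw [dist_eq_norm, dist_eq_norm]
      simpa [Real.coe_toNNReal Q hQ] using hlip a b
  set p : ℝ → EuclideanSpace ℝ (Fin n) := fun t => x + t • v with hp
  have hpc : Continuous p := by fun_prop
  have hd : ∀ t ∈ Set.uIcc (0:ℝ) 1,
      HasDerivAt (fun t => F (p t)) (⟪gradient F (p t), v⟫_ℝ) t := by
    intro t _
    have h1 : HasDerivAt p v t := by
      simpa [hp] using ((hasDerivAt_id t).smul_const v).const_add x
    have h2 : HasFDerivAt F ((InnerProductSpace.toDual ℝ _) (gradient F (p t))) (p t) :=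
      ((hF (p t)).hasGradientAt).hasFDerivAt
    have h3 := h2.comp_hasDerivAt t h1
    simp at h3 ⊢
    exact h3
  have hic : Continuous fun t => ⟪gradient F (p t), v⟫_ℝ :=
    ((hgl.continuous.comp hpc).inner continuous_const)
  have hint : F (p 1) - F (p 0) = ∫ t in (0:ℝ)..1, ⟪gradient F (p t), v⟫_ℝ :=
    (intervalIntegral.integral_eq_sub_of_hasDerivAt hd
      (hic.intervalIntegrable 0 1)).symm
  have hbound : ∀ t ∈ Set.Icc (0:ℝ) 1,
      ⟪gradient F (p t), v⟫_ℝ ≤ ⟪gradient F x, v⟫_ℝ + Q * t * ‖v‖ ^ 2 := by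
    intro t ht
    have h1 : ⟪gradient F (p t) - gradient F x, v⟫_ℝ ≤ Q * t * ‖v‖ ^ 2 := by
      calc ⟪gradient F (p t) - gradient F x, v⟫_ℝ
          ≤ ‖gradient F (p t) - gradient F x‖ * ‖v‖ := real_inner_le_norm _ _
        _ ≤ (Q * ‖p t - x‖) * ‖v‖ := by
            exact mul_le_mul_of_nonneg_right (hlip _ _) (norm_nonneg _)
        _ = Q * t * ‖v‖ ^ 2 := by
            have : ‖p t - x‖ = t * ‖v‖ := by
              simp [hp, norm_smul, abs_of_nonneg ht.1]
            rw [this]; ring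
    have := inner_sub_left (𝕜 := ℝ) (gradient F (p t)) (gradient F x) v
    linarith [h1, this.symm.le, this.le]
  have hmono : (∫ t in (0:ℝ)..1, ⟪gradient F (p t), v⟫_ℝ)
      ≤ ∫ t in (0:ℝ)..1, (⟪gradient F x, v⟫_ℝ + Q * t * ‖v‖ ^ 2) := by
    apply intervalIntegral.integral_mono_on (by norm_num)
      (hic.intervalIntegrable 0 1)
      ((by fun_prop : Continuous fun t : ℝ => ⟪gradient F x, v⟫_ℝ + Q * t * ‖v‖ ^ 2).intervalIntegrable 0 1)
    exact hbound
  have hval : (∫ t in (0:ℝ)..1, (⟪gradient F x, v⟫_ℝ + Q * t * ‖v‖ ^ 2))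
      = ⟪gradient F x, v⟫_ℝ + Q / 2 * ‖v‖ ^ 2 := by
    have h1 : (fun t : ℝ => ⟪gradient F x, v⟫_ℝ + Q * t * ‖v‖ ^ 2)
        = fun t : ℝ => ⟪gradient F x, v⟫_ℝ + (Q * ‖v‖ ^ 2) * t := by
      ext t; ring
    rw [show (∫ t in (0:ℝ)..1, (⟪gradient F x, v⟫_ℝ + Q * t * ‖v‖ ^ 2))
        = ∫ t in (0:ℝ)..1, (⟪gradient F x, v⟫_ℝ + (Q * ‖v‖ ^ 2) * t) from by rw [h1],
      intervalIntegral.integral_add intervalIntegrable_const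
        ((by fun_prop : Continuous fun t : ℝ => Q * ‖v‖ ^ 2 * t).intervalIntegrable 0 1),
      intervalIntegral.integral_const_mul, integral_id, intervalIntegral.integral_const]
    norm_num
    ring
  have hp0 : p 0 = x := by simp [hp]
  have hp1 : p 1 = y := by simp [hp, hv]
  rw [hp0, hp1] at hint
  linarith [hint, hmono, hval.le, hval.ge]

/-- descent inequality for a projected gradient step on a function with
`Q`-Lipschitz gradient, over a nonempty closed convex set `C`. -/
theorem projected_gradient_descent_lemma {n : ℕ}
    (C : Set (EuclideanSpace ℝ (Fin n))) (hne : C.Nonempty) (hcl : IsClosed C)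
    (hcv : Convex ℝ C)
    (proj : EuclideanSpace ℝ (Fin n) → EuclideanSpace ℝ (Fin n))
    (hprojmem : ∀ x, proj x ∈ C)
    (hprojnear : ∀ x, ∀ w ∈ C, ‖x - proj x‖ ≤ ‖x - w‖)
    (F : EuclideanSpace ℝ (Fin n) → ℝ) (hF : Differentiable ℝ F)
    (Q : ℝ) (hQ : 0 < Q)
    (hgradLip : ∀ x y, ‖gradient F x - gradient F y‖ ≤ Q * ‖x - y‖)
    (z : EuclideanSpace ℝ (Fin n)) (hz : z ∈ C) (η : ℝ) (hη : 0 < η) :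
    F (proj (z - η • gradient F z))
      ≤ F z - η * ⟪gradient F z, η⁻¹ • (z - proj (z - η • gradient F z))⟫_ℝ
        + (Q * η ^ 2 / 2) * ‖η⁻¹ • (z - proj (z - η • gradient F z))‖ ^ 2
    ∧ F (proj (z - η • gradient F z))
      ≤ F z - (η - Q * η ^ 2 / 2) * ‖η⁻¹ • (z - proj (z - η • gradient F z))‖ ^ 2 := by
  have hvar : ∀ x, ∀ w ∈ C, ⟪x - proj x, w - proj x⟫_ℝ ≤ 0 := by
    intro x w hw
    have : Nonempty ↑C := hne.to_subtype
    have hb : BddBelow (Set.range fun w : C => ‖x - ↑w‖) :=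
      ⟨0, Set.forall_mem_range.2 fun _ => norm_nonneg _⟩
    have hle : ‖x - proj x‖ ≤ ⨅ w : C, ‖x - ↑w‖ :=
      le_ciInf fun w => hprojnear x w w.2
    have hge : (⨅ w : C, ‖x - ↑w‖) ≤ ‖x - proj x‖ :=
      ciInf_le hb ⟨proj x, hprojmem x⟩
    have h1 : ‖x - proj x‖ = ⨅ w : C, ‖x - ↑w‖ := le_antisymm hle hge
    exact ((norm_eq_iInf_iff_real_inner_le_zero hcv (hprojmem x)).1 h1) w hw
  set g := gradient F z with hg
  set zp := proj (z - η • g) with hzp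
  set P := η⁻¹ • (z - zp) with hP
  have hηP : η • P = z - zp := by
    rw [hP, smul_smul, mul_inv_cancel₀ hη.ne', one_smul]
  have key1 := quad_upper_bound F hF Q hQ.le hgradLip z zp
  have e1 : zp - z = -(η • P) := by rw [hηP]; abel
  have e2 : ⟪g, zp - z⟫_ℝ = -(η * ⟪g, P⟫_ℝ) := by
    rw [e1, inner_neg_right, real_inner_smul_right]
  have e3 : ‖zp - z‖ ^ 2 = η ^ 2 * ‖P‖ ^ 2 := by
    rw [e1, norm_neg, norm_smul, Real.norm_eq_abs, abs_of_pos hη, mul_pow]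
  have first : F zp ≤ F z - η * ⟪g, P⟫_ℝ + (Q * η ^ 2 / 2) * ‖P‖ ^ 2 := by
    rw [e2, e3] at key1
    nlinarith [key1]
  have hv := hvar (z - η • g) z hz
  have e4 : z - η • g - zp = η • P - η • g := by rw [hηP]; abel
  have e5 : ⟪η • P - η • g, η • P⟫_ℝ ≤ 0 := by rw [← e4, hηP]; exact hv
  simp only [inner_sub_left, real_inner_smul_left, real_inner_smul_right,
    real_inner_self_eq_norm_sq, norm_smul, Real.norm_eq_abs, abs_of_pos hη, mul_pow] at e5
  have hPB : ‖P‖ ^ 2 ≤ ⟪g, P⟫_ℝ := by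
    have h2 : (0:ℝ) < η ^ 2 := by positivity
    nlinarith [e5]
  refine ⟨first, ?_⟩
  nlinarith [first, mul_le_mul_of_nonneg_left hPB hη.le]
end

section
/- Let C be a nonempty closed convex subset of ℝ^n with Π_C its orthogonal projection, and define P(z, g, η) := (1/η)(z − Π_C(z − η g)) for η > 0. Let F : ℝ^n → ℝ be differentiable with Q-Lipschitz gradient (Q > 0), and let η ∈ (0, 2/Q). Then for any z ∈ C, with z⁺ := Π_C(z − η ∇F(z)), one has ‖P(z, ∇F(z), η)‖² ≤ (F(z) − F(z⁺)) / (η − Qη²/2). -/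
open scoped RealInnerProductSpace

lemma descent_lemma {n : ℕ} (F : EuclideanSpace ℝ (Fin n) → ℝ) (hF : Differentiable ℝ F)
    (Q : ℝ) (hgradLip : ∀ x y, ‖gradient F x - gradient F y‖ ≤ Q * ‖x - y‖)
    (x y : EuclideanSpace ℝ (Fin n)) :
    F y ≤ F x + ⟪gradient F x, y - x⟫ + Q / 2 * ‖y - x‖ ^ 2 := by
  set v := y - x with hv
  set ψ : ℝ → ℝ := fun t => F (x + t • v) - t * ⟪gradient F x, v⟫ - Q * t ^ 2 / 2 * ‖v‖ ^ 2
    with hψ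
  have hline : ∀ t : ℝ, HasDerivAt (fun s : ℝ => x + s • v) v t := by
    intro t
    simpa using ((hasDerivAt_id t).smul_const v).const_add x
  have hφ : ∀ t : ℝ, HasDerivAt (fun s => F (x + s • v)) ⟪gradient F (x + t • v), v⟫ t := by
    intro t
    have h1 : HasFDerivAt F (InnerProductSpace.toDual ℝ _ (gradient F (x + t • v))) (x + t • v) :=
      hasGradientAt_iff_hasFDerivAt.1 (hF _).hasGradientAt
    exact (h1.comp_hasDerivAt t (hline t))
  have hψd : ∀ t : ℝ, HasDerivAt ψ
      (⟪gradient F (x + t • v), v⟫ - ⟪gradient F x, v⟫ - Q * t * ‖v‖ ^ 2) t := by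
    intro t
    have h2 : HasDerivAt (fun t : ℝ => t * ⟪gradient F x, v⟫) ⟪gradient F x, v⟫ t := by
      simpa using (hasDerivAt_id t).mul_const _
    have h3 : HasDerivAt (fun t : ℝ => Q * t ^ 2 / 2 * ‖v‖ ^ 2) (Q * t * ‖v‖ ^ 2) t := by
      have := ((hasDerivAt_pow 2 t).const_mul Q).div_const 2 |>.mul_const (‖v‖ ^ 2)
      refine this.congr_deriv ?_
      push_cast; ring
    exact ((hφ t).sub h2).sub h3
  have key : ψ 1 ≤ ψ 0 := by
    have hanti : AntitoneOn ψ (Set.Icc 0 1) := by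
      apply antitoneOn_of_deriv_nonpos (convex_Icc 0 1)
      · exact (Differentiable.continuous fun t => (hψd t).differentiableAt).continuousOn
      · intro t ht
        exact ((hψd t).differentiableAt).differentiableWithinAt
      · intro t ht
        rw [interior_Icc] at ht
        rw [(hψd t).deriv]
        have : ⟪gradient F (x + t • v) - gradient F x, v⟫ ≤ Q * t * ‖v‖ ^ 2 := by
          calc ⟪gradient F (x + t • v) - gradient F x, v⟫
              ≤ ‖gradient F (x + t • v) - gradient F x‖ * ‖v‖ := real_inner_le_norm _ _
            _ ≤ Q * ‖(x + t • v) - x‖ * ‖v‖ := by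
                have := hgradLip (x + t • v) x
                nlinarith [norm_nonneg v]
            _ = Q * t * ‖v‖ ^ 2 := by
                rw [add_sub_cancel_left, norm_smul, Real.norm_eq_abs,
                  abs_of_pos ht.1]
                ring
        rw [inner_sub_left] at this
        linarith
    exact hanti (by norm_num) (by norm_num) (by norm_num)
  simp only [hψ, one_smul, zero_smul, add_zero] at key
  have hy : x + v = y := by simp [hv]
  rw [hy] at key
  nlinarith [key]

set_option maxHeartbeats 1000000 in
/-- the squared norm of the projected gradient is bounded by the per-step
function decrease divided by `η - Qη²/2`, for `η ∈ (0, 2/Q)`. -/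
theorem sq_projected_gradient_le_decrease {n : ℕ}
    (C : Set (EuclideanSpace ℝ (Fin n))) (hne : C.Nonempty) (hcl : IsClosed C)
    (hcv : Convex ℝ C)
    (proj : EuclideanSpace ℝ (Fin n) → EuclideanSpace ℝ (Fin n))
    (hprojmem : ∀ x, proj x ∈ C)
    (hprojnear : ∀ x, ∀ w ∈ C, ‖x - proj x‖ ≤ ‖x - w‖)
    (F : EuclideanSpace ℝ (Fin n) → ℝ) (hF : Differentiable ℝ F)
    (Q : ℝ) (hQ : 0 < Q)
    (hgradLip : ∀ x y, ‖gradient F x - gradient F y‖ ≤ Q * ‖x - y‖)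
    (η : ℝ) (hη : 0 < η) (hη2 : η < 2 / Q)
    (z : EuclideanSpace ℝ (Fin n)) (hz : z ∈ C) :
    ‖η⁻¹ • (z - proj (z - η • gradient F z))‖ ^ 2
      ≤ (F z - F (proj (z - η • gradient F z))) / (η - Q * η ^ 2 / 2) := by
  set g := gradient F z with hg
  set x := z - η • g with hx
  set zp := proj x with hzp
  -- variational inequality
  haveI : Nonempty ↑C := hne.to_subtype
  have hvar : ∀ w ∈ C, ⟪x - zp, w - zp⟫ ≤ 0 := by
    rw [← norm_eq_iInf_iff_real_inner_le_zero hcv (hprojmem x)]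
    refine le_antisymm (le_ciInf fun w => hprojnear x w w.2) ?_
    have hb : BddBelow (Set.range fun w : ↑C => ‖x - (w : EuclideanSpace ℝ (Fin n))‖) := by
      refine ⟨0, ?_⟩
      rintro b ⟨w, rfl⟩
      exact norm_nonneg _
    exact ciInf_le hb (⟨zp, hprojmem x⟩ : ↑C)
  have hvz := hvar z hz
  have hineq : ‖z - zp‖ ^ 2 ≤ η * ⟪g, z - zp⟫ := by
    have : ⟪z - zp, z - zp⟫ - η * ⟪g, z - zp⟫ ≤ 0 := by
      have : x - zp = (z - zp) - η • g := by rw [hx]; abel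
      rw [this, inner_sub_left, real_inner_smul_left] at hvz
      linarith
    rw [← real_inner_self_eq_norm_sq]
    linarith
  -- descent lemma
  have hdesc := descent_lemma F hF Q hgradLip z zp
  have hinner : ⟪gradient F z, zp - z⟫ = - ⟪g, z - zp⟫ := by
    rw [hg, ← inner_neg_right]; congr 1; abel
  have hnormsym : ‖zp - z‖ = ‖z - zp‖ := norm_sub_rev _ _
  rw [hinner, hnormsym] at hdesc
  -- combine
  have hdecr : (η⁻¹ - Q / 2) * ‖z - zp‖ ^ 2 ≤ F z - F zp := by
    have h1 : ⟪g, z - zp⟫ ≥ η⁻¹ * ‖z - zp‖ ^ 2 := by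
      rw [ge_iff_le, inv_mul_le_iff₀ hη]
      linarith [hineq]
    nlinarith
  have hpos : 0 < η - Q * η ^ 2 / 2 := by
    have : Q * η < 2 := by
      rw [lt_div_iff₀ hQ] at hη2; linarith
    nlinarith
  rw [norm_smul, Real.norm_eq_abs, abs_of_pos (inv_pos.2 hη),
    le_div_iff₀ hpos, mul_pow]
  have hfac : η - Q * η ^ 2 / 2 = η ^ 2 * (η⁻¹ - Q / 2) := by
    field_simp
  rw [hfac]
  calc η⁻¹ ^ 2 * ‖z - zp‖ ^ 2 * (η ^ 2 * (η⁻¹ - Q / 2))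
      = (η⁻¹ - Q / 2) * ‖z - zp‖ ^ 2 * (η⁻¹ * η) ^ 2 := by ring
    _ = (η⁻¹ - Q / 2) * ‖z - zp‖ ^ 2 := by rw [inv_mul_cancel₀ hη.ne']; ring
    _ ≤ F z - F zp := hdecr
end

section
/- Let C be a nonempty compact convex subset of ℝ^n with Π_C its orthogonal projection, and define P(z, g, η) := (1/η)(z − Π_C(z − η g)) for η > 0. Let f : ℝ^n → ℝ be differentiable with continuous gradient ∇f. Then for every η > 0 there exists a point z* ∈ C such that P(z*, ∇f(z*), η) = 0, i.e., Π_C(z* − η ∇f(z*)) = z*. -/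
open InnerProductSpace RealInnerProductSpace

/-- Variational inequality at a minimizer. -/
lemma min_variational {n : ℕ} {C : Set (EuclideanSpace ℝ (Fin n))}
    (hcv : Convex ℝ C) {f : EuclideanSpace ℝ (Fin n) → ℝ} (hf : Differentiable ℝ f)
    {z : EuclideanSpace ℝ (Fin n)} (hz : z ∈ C) (hmin : ∀ w ∈ C, f z ≤ f w)
    {w : EuclideanSpace ℝ (Fin n)} (hw : w ∈ C) :
    0 ≤ ⟪gradient f z, w - z⟫_ℝ := by
  have hgrad : HasGradientAt f (gradient f z) z := (hf z).hasGradientAt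
  have hfd : HasFDerivAt f (InnerProductSpace.toDual ℝ _ (gradient f z)) z :=
    hgrad.hasFDerivAt
  -- the curve t ↦ z + t • (w - z)
  have hline : HasDerivAt (fun t : ℝ => z + t • (w - z)) (w - z) 0 := by
    simpa using ((hasDerivAt_id (0:ℝ)).smul_const (w - z)).const_add z
  have hfd' : HasFDerivAt f (InnerProductSpace.toDual ℝ _ (gradient f z))
      (z + (0:ℝ) • (w - z)) := by simpa using hfd
  have hcomp : HasDerivAt (fun t : ℝ => f (z + t • (w - z)))
      (⟪gradient f z, w - z⟫_ℝ) 0 := by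
    have := hfd'.comp_hasDerivAt 0 hline
    simpa [Function.comp_def] using this
  -- membership
  have hmem : ∀ t : ℝ, t ∈ Set.Icc (0:ℝ) 1 → z + t • (w - z) ∈ C := by
    intro t ht
    have := hcv hz hw (by linarith [ht.2] : (0:ℝ) ≤ 1 - t) ht.1 (by ring)
    convert this using 1
    simp [smul_sub, sub_smul]
    module
  -- derivative at 0 as limit of slopes from the right
  have hslope : Filter.Tendsto (fun t : ℝ => (f (z + t • (w - z)) - f z) / t)
      (nhdsWithin 0 (Set.Ioi 0)) (nhds (⟪gradient f z, w - z⟫_ℝ)) := by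
    have h := hcomp.hasDerivWithinAt (s := Set.Ioi (0:ℝ))
    rw [hasDerivWithinAt_iff_tendsto_slope] at h
    have he : (Set.Ioi (0:ℝ)) \ {0} = Set.Ioi 0 := by
      ext t; simp (config := {contextual := true}) [ne_of_gt]
    rw [he] at h
    refine h.congr fun t => ?_
    simp [slope_def_field, div_eq_inv_mul]
  refine ge_of_tendsto hslope ?_
  filter_upwards [Ioo_mem_nhdsGT_of_mem (by norm_num : (0:ℝ) ∈ Set.Ico 0 1)] with t ht
  have h1 : f z ≤ f (z + t • (w - z)) := hmin _ (hmem t ⟨le_of_lt ht.1, le_of_lt ht.2⟩)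
  exact div_nonneg (by linarith) (le_of_lt ht.1)

/-- on a nonempty compact convex set, a differentiable function with
continuous gradient admits a stationary point of the projected gradient step: a point
`z* ∈ C` fixed by `z ↦ Π_C (z - η ∇f z)`, i.e. with vanishing projected gradient. -/
theorem exists_projected_gradient_zero {n : ℕ}
    (C : Set (EuclideanSpace ℝ (Fin n))) (hne : C.Nonempty) (hcpt : IsCompact C)
    (hcv : Convex ℝ C)
    (proj : EuclideanSpace ℝ (Fin n) → EuclideanSpace ℝ (Fin n))
    (hprojmem : ∀ x, proj x ∈ C)
    (hprojnear : ∀ x, ∀ w ∈ C, ‖x - proj x‖ ≤ ‖x - w‖)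
    (f : EuclideanSpace ℝ (Fin n) → ℝ) (hf : Differentiable ℝ f)
    (hgradcont : Continuous fun x => gradient f x) :
    ∀ η : ℝ, 0 < η → ∃ z ∈ C,
      η⁻¹ • (z - proj (z - η • gradient f z)) = 0 ∧
      proj (z - η • gradient f z) = z := by
  intro η hη
  obtain ⟨z, hzC, hzmin⟩ := hcpt.exists_isMinOn hne (hf.continuous.continuousOn)
  have hmin : ∀ w ∈ C, f z ≤ f w := fun w hw => hzmin hw
  set x := z - η • gradient f z with hx
  set p := proj x with hp
  -- projection characterization for p
  haveI : Nonempty C := hne.to_subtype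
  have hinfp : ‖x - p‖ = ⨅ w : C, ‖x - w‖ := by
    apply le_antisymm
    · exact le_ciInf fun w => hprojnear x w w.2
    · exact ciInf_le ⟨0, by rintro r ⟨w, rfl⟩; positivity⟩ (⟨p, hprojmem x⟩ : C)
  have hpchar : ∀ w ∈ C, inner ℝ (x - p) (w - p) ≤ (0:ℝ) :=
    (norm_eq_iInf_iff_real_inner_le_zero hcv (hprojmem x)).mp hinfp
  -- variational inequality gives the same characterization for z
  have hzchar : ∀ w ∈ C, inner ℝ (x - z) (w - z) ≤ (0:ℝ) := by
    intro w hw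
    have hvi := min_variational hcv hf hzC hmin hw
    have : x - z = (-η) • gradient f z := by rw [hx]; module
    rw [this, real_inner_smul_left]
    nlinarith
  have h1 := hpchar z hzC
  have h2 := hzchar p (hprojmem x)
  have hkey : ‖z - p‖ ^ 2 ≤ 0 := by
    have heq : ⟪x - p, z - p⟫_ℝ + ⟪x - z, p - z⟫_ℝ = ‖z - p‖ ^ 2 := by
      rw [show (x - p) = (x - z) + (z - p) by abel, inner_add_left,
        show p - z = -(z - p) by abel, inner_neg_right, real_inner_self_eq_norm_sq]
      ring
    linarith
  have hzp : p = z := by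
    have : ‖z - p‖ = 0 := by nlinarith [norm_nonneg (z - p), sq_nonneg ‖z - p‖]
    have := norm_eq_zero.mp this
    have : z = p := by rwa [sub_eq_zero] at this
    exact this.symm
  exact ⟨z, hzC, by rw [← hp, hzp]; simp, by rw [← hp, hzp]⟩
end

section
/- Let H be a real inner product space, let φ_1, …, φ_N ∈ H, let y ∈ ℝ^N, and let λ > 0. Define the regularized least-squares objective G(w) := Σ_{t=1}^{N} (y_t − ⟨φ_t, w⟩)² + λ‖w‖² for w ∈ H. If w* ∈ H is a minimizer of G (i.e., G(w*) ≤ G(w) for all w ∈ H), then w* lies in the linear span of {φ_1, …, φ_N}; equivalently, there exist coefficients θ_1, …, θ_N ∈ ℝ such that w* = Σ_{j=1}^{N} θ_j φ_j. -/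
open scoped InnerProductSpace

/-- Representer theorem: any minimizer of the regularized least-squares
objective `G(w) = Σ_t (y_t - ⟪φ_t, w⟫)² + λ‖w‖²` over a real inner product space lies
in the span of the feature vectors `φ_1, …, φ_N`. -/
theorem representer_theorem {H : Type*} [NormedAddCommGroup H] [InnerProductSpace ℝ H]
    {N : ℕ} (φ : Fin N → H) (y : Fin N → ℝ) (l : ℝ) (hl : 0 < l)
    (w : H)
    (hmin : ∀ v : H,
      (∑ t, (y t - ⟪φ t, w⟫_ℝ) ^ 2) + l * ‖w‖ ^ 2
        ≤ (∑ t, (y t - ⟪φ t, v⟫_ℝ) ^ 2) + l * ‖v‖ ^ 2) :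
    ∃ θ : Fin N → ℝ, w = ∑ j, θ j • φ j := by
  set K : Submodule ℝ H := Submodule.span ℝ (Set.range φ) with hK
  haveI : FiniteDimensional ℝ K := by
    apply FiniteDimensional.span_of_finite
    exact Set.finite_range φ
  haveI : CompleteSpace K := FiniteDimensional.complete ℝ K
  set p : H := (K.orthogonalProjectionOnto w : H) with hp
  set q : H := w - p with hq
  have hqmem : q ∈ Kᗮ := K.sub_starProjection_mem_orthogonal w
  have hpmem : p ∈ K := Submodule.coe_mem _
  -- inner products with φ t agree
  have hinner : ∀ t, ⟪φ t, w⟫_ℝ = ⟪φ t, p⟫_ℝ := by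
    intro t
    have hmemφ : φ t ∈ K := Submodule.subset_span ⟨t, rfl⟩
    have h0 : ⟪φ t, q⟫_ℝ = 0 := by
      have h := hqmem (φ t) hmemφ
      exact h
    have : w = p + q := by simp [hq]
    rw [this, inner_add_right, h0, add_zero]
  have hpq : ⟪p, q⟫_ℝ = 0 := hqmem p hpmem
  have hnorm : ‖w‖ ^ 2 = ‖p‖ ^ 2 + ‖q‖ ^ 2 := by
    have : w = p + q := by simp [hq]
    rw [this, norm_add_sq_real, hpq]
    ring
  have hle := hmin p
  have hsum : (∑ t, (y t - ⟪φ t, w⟫_ℝ) ^ 2) = ∑ t, (y t - ⟪φ t, p⟫_ℝ) ^ 2 := by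
    apply Finset.sum_congr rfl
    intro t _
    rw [hinner t]
  rw [hsum, hnorm] at hle
  have hq0 : ‖q‖ ^ 2 ≤ 0 := by nlinarith
  have hq0' : q = 0 := by
    have : ‖q‖ = 0 := by nlinarith [norm_nonneg q, sq_nonneg ‖q‖]
    exact norm_eq_zero.mp this
  have hwmem : w ∈ K := by
    have : w = p := by
      have h := hq0'
      rw [hq] at h
      exact sub_eq_zero.mp h
    rw [this]; exact hpmem
  rw [hK, ← Set.image_univ] at hwmem
  obtain ⟨c, hc⟩ := Submodule.mem_span_range_iff_exists_fun ℝ |>.mp (by rwa [Set.image_univ] at hwmem)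
  exact ⟨c, hc.symm⟩
end
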